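/- For q defined as the least integer with C_t(q) ≥ ℓ−1, one has q = (log² t / α)·m + O(log m), where m = ⌈log_t ℓ⌉ and α = h(1/t)·t·log t, as ℓ → ∞. -/

import Mathlib

/-- A `t`-ary tree: either empty, or a root node with `t` ordered subtrees. -/
inductive TAry (t : ℕ) : Type where
  | nil : TAry t
  | node : (Fin t → TAry t) → TAry t

namespace TAry

variable {t : ℕ}

/-- Number of nodes of a `t`-ary tree. -/
def size : TAry t → ℕ
  | nil => 0
  | node c => 1 + ∑ i, (c i).size

/-- Sum over nodes of `d +` (depth of the node). -/
def plFrom : TAry t → ℕ → ℕ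
  | nil, _ => 0
  | node c, d => d + ∑ i, (c i).plFrom (d + 1)

/-- Path length: the sum of the depths of all nodes. -/
def pathLength (T : TAry t) : ℕ := T.plFrom 0

/-- Number of nodes at depth `j` (the profile `D_j`). -/
def depthCount : ℕ → TAry t → ℕ
  | _, nil => 0
  | 0, node _ => 1
  | j + 1, node c => ∑ i, depthCount j (c i)

/-- Number of leaves (nodes all of whose subtrees are empty). -/
def leaves : TAry t → ℕ
  | nil => 0
  | node c => max 1 (∑ i, (c i).leaves)

end TAry

namespace TAry
variable {t : ℕ}

/-- Every internal (non-leaf) node has exactly one child. -/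
def chain : TAry t → Prop
  | nil => True
  | node c => (∀ i, c i = nil) ∨ ∃ i, c i ≠ nil ∧ chain (c i) ∧ ∀ j, j ≠ i → c j = nil

/-- Number of leaves at depth `j`. -/
def leavesAt : ℕ → TAry t → ℕ
  | _, nil => 0
  | 0, node c => if (∑ i, (c i).size) = 0 then 1 else 0
  | j + 1, node c => ∑ i, leavesAt j (c i)

/-- The subtree of `T` at position `pos` (empty tree if the position is invalid). -/
def getAt : TAry t → List (Fin t) → TAry t
  | T, [] => T
  | nil, _ :: _ => nil
  | node c, i :: rest => getAt (c i) rest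

/-- Replace the subtree of `T` at position `pos` by `τ`. -/
def replaceAt : TAry t → List (Fin t) → TAry t → TAry t
  | _, [], τ => τ
  | nil, _ :: _, _ => nil
  | node c, i :: rest, τ => node (fun j => if j = i then replaceAt (c i) rest τ else c j)

/-- Attach the trees `τs i` at the positions `pos i`, for `i = 0, …, ℓ-1`. -/
def attachAll {ℓ : ℕ} (T : TAry t) (pos : Fin ℓ → List (Fin t)) (τs : Fin ℓ → TAry t) :
    TAry t :=
  (List.finRange ℓ).foldl (fun A i => replaceAt A (pos i) (τs i)) T

end TAry

/-- The binary entropy function (natural logarithm). -/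
noncomputable def binEnt (x : ℝ) : ℝ := -x * Real.log x - (1 - x) * Real.log (1 - x)

/-- Number of `t`-ary trees with exactly `n` nodes. -/
noncomputable def Ct (t n : ℕ) : ℕ := Nat.card {T : TAry t // T.size = n}

/-- Number of `t`-ary trees with path length exactly `p`. -/
noncomputable def Tt (t p : ℕ) : ℕ := Nat.card {T : TAry t // T.pathLength = p}

namespace TAry
variable {t : ℕ}

def code : TAry t → List Bool
  | nil => [false]
  | node c => true :: (List.ofFn (fun i => code (c i))).flatten

def codeF (ts : List (TAry t)) : List Bool := (ts.map code).flatten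

@[simp] lemma codeF_nil : codeF ([] : List (TAry t)) = [] := rfl
@[simp] lemma codeF_cons (T : TAry t) (ts) : codeF (T :: ts) = code T ++ codeF ts := by
  simp [codeF]

@[simp] lemma codeF_append (l₁ l₂ : List (TAry t)) : codeF (l₁ ++ l₂) = codeF l₁ ++ codeF l₂ := by
  simp [codeF]

lemma code_node (c : Fin t → TAry t) : code (node c) = true :: codeF (List.ofFn c) := by
  simp only [code, codeF, List.map_ofFn]
  rfl

lemma code_length (T : TAry t) : (code T).length = t * T.size + 1 := by
  induction T with
  | nil => simp [code, size]
  | node c ih =>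
      simp only [code, size, List.length_cons, List.length_flatten, List.map_ofFn]
      rw [List.sum_ofFn]
      simp only [Function.comp, ih]
      rw [Finset.sum_add_distrib, Finset.sum_const, Finset.card_univ, Fintype.card_fin,
        ← Finset.mul_sum]
      ring

lemma code_count (T : TAry t) : (code T).count true = T.size := by
  induction T with
  | nil => simp [code, size]
  | node c ih =>
      simp only [code, size, List.count_cons]
      rw [List.count_flatten, List.map_ofFn, List.sum_ofFn]
      simp [Function.comp, ih, Nat.add_comm]

lemma codeF_length (ts : List (TAry t)) :
    (codeF ts).length = t * ((ts.map size).sum) + ts.length := by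
  induction ts with
  | nil => simp
  | cons T ts ih => simp [code_length, ih]; ring

lemma codeF_count (ts : List (TAry t)) :
    (codeF ts).count true = (ts.map size).sum := by
  induction ts with
  | nil => simp [codeF]
  | cons T ts ih => simp [List.count_append, code_count, ih]

lemma ofFn_get_of_length {α : Type*} (l : List α) (N : ℕ) (h : l.length = N) :
    List.ofFn (fun i : Fin N => l.get ⟨i.1, by omega⟩) = l := by
  subst h; exact List.ofFn_get l

lemma codeF_prefix_free : ∀ (n : ℕ) (ts₁ ts₂ : List (TAry t)) (s₁ s₂ : List Bool),
    (codeF ts₁).length ≤ n → ts₁.length = ts₂.length →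
    codeF ts₁ ++ s₁ = codeF ts₂ ++ s₂ → ts₁ = ts₂ ∧ s₁ = s₂ := by
  intro n
  induction n with
  | zero =>
      intro ts₁ ts₂ s₁ s₂ hn hl h
      match ts₁, ts₂ with
      | [], [] => simpa using h
      | T₁ :: r₁, T₂ :: r₂ =>
          rw [codeF_cons] at hn
          simp [code_length] at hn
  | succ n ih =>
      intro ts₁ ts₂ s₁ s₂ hn hl h
      match ts₁, ts₂ with
      | [], [] => simpa using h
      | T₁ :: r₁, T₂ :: r₂ =>
          match T₁, T₂ with
          | nil, nil =>
              have h' : codeF r₁ ++ s₁ = codeF r₂ ++ s₂ := by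
                simpa [code] using h
              have hn' : (codeF r₁).length ≤ n := by
                simp [code] at hn; omega
              obtain ⟨h1, h2⟩ := ih r₁ r₂ s₁ s₂ hn' (by simpa using hl) h'
              exact ⟨by rw [h1], h2⟩
          | nil, node c₂ =>
              exfalso
              rw [codeF_cons, codeF_cons, code_node] at h
              simp [code] at h
          | node c₁, nil =>
              exfalso
              rw [codeF_cons, codeF_cons, code_node] at h
              simp [code] at h
          | node c₁, node c₂ =>
              rw [codeF_cons, codeF_cons, code_node, code_node] at h
              simp only [List.cons_append, List.append_assoc, List.cons.injEq, true_and] at h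
              rw [← List.append_assoc, ← List.append_assoc, ← codeF_append, ← codeF_append] at h
              have hn' : (codeF (List.ofFn c₁ ++ r₁)).length ≤ n := by
                rw [codeF_cons, code_node] at hn
                simp only [codeF_append] at *
                simp at hn ⊢; omega
              have hl' : (List.ofFn c₁ ++ r₁).length = (List.ofFn c₂ ++ r₂).length := by
                simp at hl ⊢; omega
              obtain ⟨h1, h2⟩ := ih _ _ s₁ s₂ hn' hl' h
              have h3 := List.append_inj h1 (by simp)
              obtain ⟨h4, h5⟩ := h3
              have : c₁ = c₂ := by
                funext i
                have := congrArg (fun l => l[i.1]?) h4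
                simpa [List.getElem?_ofFn] using this
              exact ⟨by rw [this, h5], h2⟩

lemma decode_forest : ∀ (n : ℕ) (w : List Bool) (k : ℕ), w.length ≤ n →
    w.length = t * w.count true + k →
    (∀ u, u <+: w → u.length < w.length → u.length < t * u.count true + k) →
    ∃ ts : List (TAry t), ts.length = k ∧ codeF ts = w := by
  intro n
  induction n with
  | zero =>
      intro w k hn hb _
      have hw : w = [] := List.eq_nil_of_length_eq_zero (by omega)
      subst hw
      exact ⟨[], by simp_all, rfl⟩
  | succ n ih =>
      intro w k hn hb hp
      match w with
      | [] =>
          exact ⟨[], by simp_all, rfl⟩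
      | b :: rest =>
          match k with
          | 0 =>
              exfalso
              have := hp [] (by simp) (by simp)
              simp at this
          | k' + 1 =>
              match b with
              | false =>
                  have hb' : rest.length = t * rest.count true + k' := by
                    simp [List.count_cons, Nat.mul_add, Nat.mul_one] at hb; omega
                  have hp' : ∀ u, u <+: rest → u.length < rest.length →
                      u.length < t * u.count true + k' := by
                    intro u hu hlu
                    have := hp (false :: u) (by simpa using hu) (by simpa using hlu)
                    simp [List.count_cons] at this; omega
                  obtain ⟨ts', hlen, hcode⟩ := ih rest k' (by simp at hn; omega) hb' hp'
                  exact ⟨nil :: ts', by simp [hlen], by simp [code, hcode]⟩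
              | true =>
                  have hb' : rest.length = t * rest.count true + (t + k') := by
                    simp [List.count_cons, Nat.mul_add, Nat.mul_one] at hb; omega
                  have hp' : ∀ u, u <+: rest → u.length < rest.length →
                      u.length < t * u.count true + (t + k') := by
                    intro u hu hlu
                    have := hp (true :: u) (by simpa using hu) (by simpa using hlu)
                    simp [List.count_cons, Nat.mul_add, Nat.mul_one] at this
                    omega
                  obtain ⟨ts', hlen, hcode⟩ := ih rest (t + k') (by simp at hn; omega) hb' hp'
                  have htk : (ts'.take t).length = t := by
                    rw [List.length_take]; omega
                  set c : Fin t → TAry t := fun i => (ts'.take t).get ⟨i.1, by omega⟩ with hc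
                  have hofn : List.ofFn c = ts'.take t := ofFn_get_of_length _ t htk
                  refine ⟨node c :: ts'.drop t, ?_, ?_⟩
                  · simp; omega
                  · rw [codeF_cons, code_node, hofn]
                    have : codeF (ts'.take t) ++ codeF (ts'.drop t) = codeF ts' := by
                      rw [← codeF_append, List.take_append_drop]
                    simp only [List.cons_append, this, hcode]


lemma cycle_exists (w : List Bool) (n : ℕ) (hN : w.length = t * n + 1)
    (hc : w.count true = n) :
    ∃ r < w.length, ∃ T : TAry t, code T = w.drop r ++ w.take r := by
  classical
  set N := w.length with hNdef
  have hN1 : 1 ≤ N := by omega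
  set cnt : ℕ → ℕ := fun j => (w.take j).count true with hcnt
  have Fsplit : ∀ a b, cnt (a + b) = cnt a + ((w.drop a).take b).count true := by
    intro a b
    simp only [hcnt]
    rw [List.take_add, List.count_append]
  have Ffull : ∀ a, N ≤ a → cnt a = n := by
    intro a ha
    simp only [hcnt]
    rw [List.take_of_length_le (by omega)]
    exact hc
  have Fdrop : ∀ a, a ≤ N → (w.drop a).count true + cnt a = n := by
    intro a ha
    have := Fsplit a (N - a)
    rw [List.take_of_length_le (by simp; omega)] at this
    rw [Ffull (a + (N - a)) (by omega)] at this
    omega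
  set g : ℕ → ℤ := fun j => (t : ℤ) * cnt j - j with hg
  have hgN : g N = -1 := by
    simp only [hg, Ffull N le_rfl]
    have : (N : ℤ) = t * n + 1 := by exact_mod_cast hN
    omega
  have hg0 : g 0 = 0 := by simp [hg, hcnt]
  -- find a good rotation point r
  obtain ⟨r, hrN, P2, P3, P4⟩ :
      ∃ r, r < N ∧ (∀ j, j < r → g r + 1 ≤ g j) ∧
        (∀ j, r ≤ j → j < N → g r ≤ g j) ∧ (0 < r → g r ≤ -1) := by
    have hne : ((Finset.range (N + 1)).image g).Nonempty :=
      Finset.Nonempty.image ⟨0, by simp⟩ _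
    set M : ℤ := ((Finset.range (N + 1)).image g).min' hne with hM
    have hmin : ∀ j, j ≤ N → M ≤ g j := fun j hj =>
      Finset.min'_le _ _ (Finset.mem_image_of_mem g (by simp; omega))
    have hex : ∃ j, j ≤ N ∧ g j = M := by
      obtain ⟨j, hj, hje⟩ := Finset.mem_image.1 (Finset.min'_mem _ hne)
      exact ⟨j, by simp at hj; omega, hje⟩
    have hj₀N : Nat.find hex ≤ N := (Nat.find_spec hex).1
    have hj₀M : g (Nat.find hex) = M := (Nat.find_spec hex).2
    have hfirst : ∀ j, j < Nat.find hex → M + 1 ≤ g j := by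
      intro j hj
      have h1 := Nat.find_min hex hj
      have h2 : M ≤ g j := hmin j (by omega)
      have : g j ≠ M := fun h => h1 ⟨by omega, h⟩
      omega
    have hMneg : M ≤ -1 := by rw [← hgN]; exact hmin N le_rfl
    by_cases hcase : Nat.find hex = N
    · refine ⟨0, by omega, by omega, ?_, by omega⟩
      intro j _ hj
      have := hfirst j (by omega)
      rw [← hcase] at hgN
      omega
    · refine ⟨Nat.find hex, by omega, ?_, ?_, ?_⟩
      · intro j hj
        have := hfirst j hj
        omega
      · intro j hj _
        have := hmin j (by omega)
        omega
      · intro _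
        omega
  -- the rotated word
  set w' : List Bool := w.drop r ++ w.take r with hw'
  have hlen' : w'.length = N := by simp [hw']; omega
  have hcount' : w'.count true = n := by
    rw [hw', List.count_append]
    have h1 := Fdrop r (by omega)
    simp only [hcnt] at h1
    omega
  -- prefix condition for decode
  have hpre : ∀ u, u <+: w' → u.length < w'.length → u.length < t * u.count true + 1 := by
    intro u hu hul
    have hut : u = w'.take u.length := List.prefix_iff_eq_take.1 hu
    set i := u.length with hi
    have hiN : i < N := by rw [hlen'] at hul; exact hul
    rw [hut, hw', List.take_append, List.count_append]
    have hdl : (w.drop r).length = N - r := by simp; omega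
    rw [hdl]
    rcases le_or_gt i (N - r) with hcase | hcase
    · -- i ≤ N - r
      rw [show i - (N - r) = 0 by omega]
      simp only [List.take_zero, List.count_nil, Nat.add_zero]
      have hs := Fsplit r i
      have hkey : (i : ℤ) ≤ (t : ℤ) * (((w.drop r).take i).count true : ℤ) := by
        have hcnteq : ((cnt (r + i) : ℕ) : ℤ) = (cnt r : ℤ) + (((w.drop r).take i).count true : ℤ) := by
          exact_mod_cast congrArg (Nat.cast : ℕ → ℤ) hs
        rcases lt_or_ge (r + i) N with hri | hri
        · have h1 : g r ≤ g (r + i) := P3 (r + i) (by omega) hri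
          simp only [hg] at h1
          have h9 := congrArg (fun x => (t : ℤ) * x) hcnteq
          simp only [mul_add] at h9
          push_cast at h1 h9 ⊢
          linarith
        · have hriN : r + i = N := by omega
          have hrpos : 0 < r := by omega
          have h1 : g r ≤ -1 := P4 hrpos
          rw [hriN] at hcnteq
          have h2 : g N = -1 := hgN
          simp only [hg] at h1 h2
          have hNc : (N : ℤ) = (r : ℤ) + (i : ℤ) := by exact_mod_cast hriN.symm
          have h9 := congrArg (fun x => (t : ℤ) * x) hcnteq
          simp only [mul_add] at h9
          push_cast at h1 h2 h9 ⊢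
          linarith
      have : i ≤ t * ((w.drop r).take i).count true := by exact_mod_cast hkey
      omega
    · -- i > N - r
      have hjr : i - (N - r) < r := by omega
      set j := i - (N - r) with hj
      rw [List.take_of_length_le (by rw [hdl]; omega),
          List.take_take, show min j r = j by omega]
      have h3 := Fdrop r (by omega)
      have h4 : g r + 1 ≤ g j := P2 j hjr
      have h5 : g r ≤ -1 := P4 (by omega)
      have hkey : (i : ℤ) < (t : ℤ) * (((w.drop r).count true + (w.take j).count true : ℕ) : ℤ) + 1 := by
        simp only [hg] at h4 h5
        have hc3 : ((w.drop r).count true : ℤ) + (cnt r : ℤ) = (n : ℤ) := by exact_mod_cast h3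
        have hcj : ((w.take j).count true : ℤ) = (cnt j : ℤ) := by simp [hcnt]
        have hieq : (i : ℤ) + (r : ℤ) = (N : ℤ) + (j : ℤ) := by
          exact_mod_cast (show i + r = N + j by omega)
        have hNc : (N : ℤ) = (t : ℤ) * n + 1 := by exact_mod_cast hN
        have h8 := congrArg (fun x => (t : ℤ) * x) hc3
        simp only [mul_add] at h8
        push_cast
        linarith
      exact_mod_cast hkey
  have hbal : w'.length = t * w'.count true + 1 := by rw [hlen', hcount']; exact hN
  obtain ⟨ts, hts1, hts2⟩ := decode_forest w'.length w' 1 le_rfl hbal hpre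
  match ts, hts1 with
  | [T], _ =>
      refine ⟨r, by omega, T, ?_⟩
      have : codeF [T] = code T := by simp
      rw [← this, hts2]

lemma ofFn_getD_of_length {α : Type*} (l : List α) (d : α) (N : ℕ) (h : l.length = N) :
    List.ofFn (fun i : Fin N => l.getD i.1 d) = l := by
  subst h
  have : (fun i : Fin l.length => l.getD i.1 d) = fun i : Fin l.length => l.get i := by
    funext i
    rw [List.getD_eq_getElem l d i.2]
    simp
  rw [this, List.ofFn_get]

lemma code_injective : Function.Injective (code : TAry t → List Bool) := by
  intro T₁ T₂ h
  have := codeF_prefix_free (codeF [T₁]).length [T₁] [T₂] [] [] le_rfl rfl (by simp [h])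
  simpa using this.1

lemma count_ofFn {N : ℕ} (v : Fin N → Bool) :
    (List.ofFn v).count true = (Finset.univ.filter fun i => v i = true).card := by
  induction N with
  | zero => simp
  | succ N ih =>
      rw [List.ofFn_succ, List.count_cons, ih (fun i => v i.succ)]
      rw [Finset.card_filter, Finset.card_filter, Fin.sum_univ_succ]
      have : ((v 0 == true) = true) ↔ (v 0 = true) := by simp
      by_cases h0 : v 0 = true <;> simp [h0] <;> omega

instance finite_sized (n : ℕ) : Finite {T : TAry t // T.size = n} := by
  refine Finite.of_injective
    (fun T => fun i : Fin (t * n + 1) => (code T.1).getD i.1 false) ?_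
  intro T₁ T₂ h
  have h₁ : (code T₁.1).length = t * n + 1 := by rw [code_length, T₁.2]
  have h₂ : (code T₂.1).length = t * n + 1 := by rw [code_length, T₂.2]
  have e₁ := ofFn_getD_of_length (code T₁.1) false _ h₁
  have e₂ := ofFn_getD_of_length (code T₂.1) false _ h₂
  have : code T₁.1 = code T₂.1 := by rw [← e₁, ← e₂]; exact congrArg _ h
  exact Subtype.ext (code_injective this)

noncomputable def Ct' (t n : ℕ) : ℕ := Nat.card {T : TAry t // T.size = n}

lemma card_omega (N n : ℕ) :
    Nat.card {v : Fin N → Bool // (List.ofFn v).count true = n} = N.choose n := by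
  classical
  have e : {v : Fin N → Bool // (List.ofFn v).count true = n} ≃
      {s : Finset (Fin N) // s.card = n} := by
    refine
      { toFun := fun v => ⟨Finset.univ.filter fun i => v.1 i = true, by
          rw [← count_ofFn]; exact v.2⟩
        invFun := fun s => ⟨fun i => i ∈ s.1, by
          rw [count_ofFn]
          have : (Finset.univ.filter fun i => (decide (i ∈ s.1)) = true) = s.1 := by
            ext i; simp
          rw [this, s.2]⟩
        left_inv := ?_
        right_inv := ?_ }
    · intro v
      ext i
      simp
    · intro s
      ext i
      simp
  rw [Nat.card_congr e, Nat.card_eq_fintype_card, Fintype.card_finset_len,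
    Fintype.card_fin]

lemma Ct'_le_choose (n : ℕ) : Ct' t n ≤ (t * n + 1).choose n := by
  classical
  rw [← card_omega (t * n + 1) n]
  refine Nat.card_le_card_of_injective
    (fun T : {T : TAry t // T.size = n} =>
      (⟨fun i : Fin (t * n + 1) => (code T.1).getD i.1 false, by
        rw [ofFn_getD_of_length (code T.1) false _ (by rw [code_length, T.2]),
          code_count, T.2]⟩ :
        {v : Fin (t * n + 1) → Bool // (List.ofFn v).count true = n})) ?_
  intro T₁ T₂ h
  simp only [Subtype.mk.injEq] at h
  have h₁ : (code T₁.1).length = t * n + 1 := by rw [code_length, T₁.2]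
  have h₂ : (code T₂.1).length = t * n + 1 := by rw [code_length, T₂.2]
  have e₁ := ofFn_getD_of_length (code T₁.1) false _ h₁
  have e₂ := ofFn_getD_of_length (code T₂.1) false _ h₂
  have : code T₁.1 = code T₂.1 := by rw [← e₁, ← e₂, h]
  exact Subtype.ext (code_injective this)

lemma choose_le_Ct' (n : ℕ) :
    (t * n + 1).choose n ≤ (t * n + 1) * Ct' t n := by
  classical
  set N := t * n + 1 with hNdef
  rw [← card_omega N n]
  have key : ∀ v : {v : Fin N → Bool // (List.ofFn v).count true = n},
      ∃ p : {T : TAry t // T.size = n} × Fin N,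
        code p.1.1 = (List.ofFn v.1).drop p.2.1 ++ (List.ofFn v.1).take p.2.1 := by
    intro v
    obtain ⟨r, hr, T, hT⟩ := cycle_exists (List.ofFn v.1) n (by simp only [List.length_ofFn]; exact hNdef) v.2
    have hsize : T.size = n := by
      have h1 : (code T).count true = T.size := code_count T
      rw [hT, List.count_append, Nat.add_comm, ← List.count_append,
        List.take_append_drop, v.2] at h1
      omega
    exact ⟨(⟨T, hsize⟩, ⟨r, by simp at hr; omega⟩), hT⟩
  have hcard : Nat.card ({T : TAry t // T.size = n} × Fin N) = N * Ct' t n := by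
    rw [Nat.card_prod, Nat.card_eq_fintype_card (α := Fin N), Fintype.card_fin, Ct']
    ring
  rw [← hcard]
  refine Nat.card_le_card_of_injective (fun v => (key v).choose) ?_
  intro v₁ v₂ h
  have s₁ := (key v₁).choose_spec
  have s₂ := (key v₂).choose_spec
  have h' : (key v₁).choose = (key v₂).choose := h
  rw [h'] at s₁
  set p := (key v₂).choose
  have heq : (List.ofFn v₁.1).drop p.2.1 ++ (List.ofFn v₁.1).take p.2.1 =
      (List.ofFn v₂.1).drop p.2.1 ++ (List.ofFn v₂.1).take p.2.1 := by
    rw [← s₁, ← s₂]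
  have hlen : ((List.ofFn v₁.1).drop p.2.1).length = ((List.ofFn v₂.1).drop p.2.1).length := by
    simp
  obtain ⟨hd, ht'⟩ := List.append_inj heq (by simpa using hlen)
  have : List.ofFn v₁.1 = List.ofFn v₂.1 := by
    rw [← List.take_append_drop p.2.1 (List.ofFn v₁.1),
      ← List.take_append_drop p.2.1 (List.ofFn v₂.1), hd, ht']
  exact Subtype.ext (List.ofFn_injective this)

section Binom

variable (t : ℕ) (ht : 2 ≤ t) (n : ℕ)

private def Bt (t N k : ℕ) : ℕ := N.choose k * (t - 1) ^ (N - k)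

lemma Bt_up (ht : 2 ≤ t) (n j : ℕ) (hj : j < n) :
    Bt t (t * n + 1) j ≤ Bt t (t * n + 1) (j + 1) := by
  set N := t * n + 1 with hN
  have e : (t - 1) * (j + 1) = t * (j + 1) - (j + 1) := by
    rw [Nat.sub_mul, Nat.one_mul]
  have hn : n ≤ t * n := Nat.le_mul_of_pos_left n (by omega)
  have h1 : t * (j + 1) ≤ t * n := Nat.mul_le_mul_left t hj
  have key : (t - 1) * (j + 1) ≤ N - j := by omega
  have id1 : N.choose (j + 1) * (j + 1) = N.choose j * (N - j) :=
    Nat.choose_succ_right_eq N j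
  have h2 : N.choose j * ((t - 1) * (j + 1)) ≤ N.choose (j + 1) * (j + 1) := by
    rw [id1]
    exact Nat.mul_le_mul_left _ key
  have h3 : N.choose j * (t - 1) ≤ N.choose (j + 1) := by
    refine Nat.le_of_mul_le_mul_right ?_ (show 0 < j + 1 by omega)
    calc N.choose j * (t - 1) * (j + 1) = N.choose j * ((t - 1) * (j + 1)) := by ring
      _ ≤ N.choose (j + 1) * (j + 1) := h2
  have hpow : N - j = (N - (j + 1)) + 1 := by omega
  calc N.choose j * (t - 1) ^ (N - j)
      = N.choose j * (t - 1) * (t - 1) ^ (N - (j + 1)) := by rw [hpow]; ring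
    _ ≤ N.choose (j + 1) * (t - 1) ^ (N - (j + 1)) :=
        Nat.mul_le_mul_right _ h3

lemma Bt_down (ht : 2 ≤ t) (n j : ℕ) (hj : n ≤ j) :
    Bt t (t * n + 1) (j + 1) ≤ Bt t (t * n + 1) j := by
  set N := t * n + 1 with hN
  rcases le_or_gt N j with hNj | hjN
  · have : N.choose (j + 1) = 0 := Nat.choose_eq_zero_of_lt (by omega)
    simp [Bt, this]
  have e : (t - 1) * (j + 1) = t * (j + 1) - (j + 1) := by
    rw [Nat.sub_mul, Nat.one_mul]
  have h1 : t * (n + 1) ≤ t * (j + 1) := Nat.mul_le_mul_left t (by omega)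
  have h1' : t * (n + 1) = t * n + t := by ring
  have key : N - j ≤ (t - 1) * (j + 1) := by omega
  have id1 : N.choose (j + 1) * (j + 1) = N.choose j * (N - j) :=
    Nat.choose_succ_right_eq N j
  have h3 : N.choose (j + 1) ≤ N.choose j * (t - 1) := by
    refine Nat.le_of_mul_le_mul_right ?_ (show 0 < j + 1 by omega)
    calc N.choose (j + 1) * (j + 1) = N.choose j * (N - j) := id1
      _ ≤ N.choose j * ((t - 1) * (j + 1)) := Nat.mul_le_mul_left _ key
      _ = N.choose j * (t - 1) * (j + 1) := by ring
  have hpow : N - j = (N - (j + 1)) + 1 := by omega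
  calc N.choose (j + 1) * (t - 1) ^ (N - (j + 1))
      ≤ N.choose j * (t - 1) * (t - 1) ^ (N - (j + 1)) :=
        Nat.mul_le_mul_right _ h3
    _ = N.choose j * (t - 1) ^ (N - j) := by rw [hpow]; ring

lemma Bt_max_below (ht : 2 ≤ t) (n : ℕ) :
    ∀ d k, k + d = n → Bt t (t * n + 1) k ≤ Bt t (t * n + 1) n := by
  intro d
  induction d with
  | zero => intro k hk; rw [show k = n by omega]
  | succ d ih =>
      intro k hk
      exact le_trans (Bt_up t ht n k (by omega)) (ih (k + 1) (by omega))

lemma Bt_max_above (ht : 2 ≤ t) (n : ℕ) :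
    ∀ d k, n + d = k → Bt t (t * n + 1) k ≤ Bt t (t * n + 1) n := by
  intro d
  induction d with
  | zero => intro k hk; rw [show k = n by omega]
  | succ d ih =>
      intro k hk
      rw [show k = (n + d) + 1 by omega]
      exact le_trans (Bt_down t ht n (n + d) (by omega)) (ih (n + d) (by omega))

lemma Bt_max (ht : 2 ≤ t) (n k : ℕ) : Bt t (t * n + 1) k ≤ Bt t (t * n + 1) n := by
  rcases le_or_gt k n with hk | hk
  · exact Bt_max_below t ht n (n - k) k (by omega)
  · exact Bt_max_above t ht n (k - n) k (by omega)

lemma pow_eq_sum_Bt (ht : 2 ≤ t) (N : ℕ) :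
    t ^ N = ∑ k ∈ Finset.range (N + 1), Bt t N k := by
  have h := add_pow 1 (t - 1) N (R := ℕ)
  rw [show 1 + (t - 1) = t by omega] at h
  rw [h]
  refine Finset.sum_congr rfl fun k _ => ?_
  simp [Bt, Nat.one_pow]
  ring

lemma choose_le_pow_t (ht : 2 ≤ t) (n : ℕ) :
    (t * n + 1).choose n * (t - 1) ^ ((t - 1) * n + 1) ≤ t ^ (t * n + 1) := by
  have hsub : (t * n + 1) - n = (t - 1) * n + 1 := by
    have e : (t - 1) * n = t * n - n := by rw [Nat.sub_mul, Nat.one_mul]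
    have : n ≤ t * n := Nat.le_mul_of_pos_left n (by omega)
    omega
  rw [pow_eq_sum_Bt t ht]
  have : Bt t (t * n + 1) n = (t * n + 1).choose n * (t - 1) ^ ((t - 1) * n + 1) := by
    rw [Bt, hsub]
  rw [← this]
  exact Finset.single_le_sum (f := fun k => Bt t (t * n + 1) k) (fun _ _ => Nat.zero_le _)
    (Finset.mem_range.2 (by omega))

lemma pow_t_le_choose (ht : 2 ≤ t) (n : ℕ) :
    t ^ (t * n + 1) ≤ (t * n + 2) * ((t * n + 1).choose n * (t - 1) ^ ((t - 1) * n + 1)) := by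
  have hsub : (t * n + 1) - n = (t - 1) * n + 1 := by
    have e : (t - 1) * n = t * n - n := by rw [Nat.sub_mul, Nat.one_mul]
    have : n ≤ t * n := Nat.le_mul_of_pos_left n (by omega)
    omega
  rw [pow_eq_sum_Bt t ht]
  have hB : Bt t (t * n + 1) n = (t * n + 1).choose n * (t - 1) ^ ((t - 1) * n + 1) := by
    rw [Bt, hsub]
  calc ∑ k ∈ Finset.range (t * n + 1 + 1), Bt t (t * n + 1) k
      ≤ (Finset.range (t * n + 1 + 1)).card * Bt t (t * n + 1) n := by
        rw [← smul_eq_mul]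
        exact Finset.sum_le_card_nsmul _ _ _ (fun k _ => Bt_max t ht n k)
    _ = (t * n + 2) * ((t * n + 1).choose n * (t - 1) ^ ((t - 1) * n + 1)) := by
        rw [Finset.card_range, hB]

end Binom

section RealBounds

open Real

noncomputable def alphaR (t : ℕ) : ℝ :=
  (t : ℝ) * Real.log t - ((t : ℝ) - 1) * Real.log ((t : ℝ) - 1)

variable {t : ℕ}

lemma cast_tsub (ht : 2 ≤ t) : ((t - 1 : ℕ) : ℝ) = (t : ℝ) - 1 := by
  push_cast [Nat.cast_sub (show 1 ≤ t by omega)]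
  ring

lemma log_t_pos (ht : 2 ≤ t) : 0 < Real.log t :=
  Real.log_pos (by exact_mod_cast ht)

lemma log_tsub_nonneg (ht : 2 ≤ t) : 0 ≤ Real.log ((t : ℝ) - 1) :=
  Real.log_nonneg (by
    have : (2 : ℝ) ≤ t := by exact_mod_cast ht
    linarith)

lemma log_tsub_le (ht : 2 ≤ t) : Real.log ((t : ℝ) - 1) ≤ Real.log t := by
  have h2 : (2 : ℝ) ≤ t := by exact_mod_cast ht
  exact Real.log_le_log (by linarith) (by linarith)

lemma log_t_le_alphaR (ht : 2 ≤ t) : Real.log t ≤ alphaR t := by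
  have h2 : (2 : ℝ) ≤ t := by exact_mod_cast ht
  have h1 := log_tsub_le ht
  have h0 := log_tsub_nonneg ht
  rw [alphaR]
  nlinarith

lemma alphaR_pos (ht : 2 ≤ t) : 0 < alphaR t := lt_of_lt_of_le (log_t_pos ht) (log_t_le_alphaR ht)

/-- `log a ≤ q * α + log t` whenever `a ≤ C_t(q)`-style upper bound holds. -/
lemma log_le_of_mul_pow_le (ht : 2 ≤ t) {a q : ℕ} (h1 : 1 ≤ a)
    (h : a * (t - 1) ^ ((t - 1) * q + 1) ≤ t ^ (t * q + 1)) :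
    Real.log a ≤ q * alphaR t + Real.log t := by
  have h2 : (2 : ℝ) ≤ t := by exact_mod_cast ht
  have hcast : ((t - 1 : ℕ) : ℝ) = (t : ℝ) - 1 := cast_tsub ht
  have hR : (a : ℝ) * ((t : ℝ) - 1) ^ ((t - 1) * q + 1) ≤ (t : ℝ) ^ (t * q + 1) := by
    have := (Nat.cast_le (α := ℝ)).2 h
    push_cast at this
    rwa [hcast] at this
  have hapos : (0 : ℝ) < a := by exact_mod_cast h1
  have htm1 : (0 : ℝ) < (t : ℝ) - 1 := by linarith
  have hlog := Real.log_le_log (by positivity) hR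
  rw [Real.log_mul (ne_of_gt hapos) (by positivity), Real.log_pow, Real.log_pow] at hlog
  have hc1 : (((t - 1) * q + 1 : ℕ) : ℝ) = ((t : ℝ) - 1) * q + 1 := by
    push_cast [Nat.cast_sub (show 1 ≤ t by omega)]
    ring
  have hc2 : ((t * q + 1 : ℕ) : ℝ) = (t : ℝ) * q + 1 := by push_cast; ring
  rw [hc1, hc2] at hlog
  have h0 := log_tsub_nonneg ht
  rw [alphaR]
  nlinarith

lemma Ct'_nat_lower (ht : 2 ≤ t) (q : ℕ) :
    t ^ (t * q + 1) ≤ (t * q + 2) * ((t * q + 1) * Ct' t q) * (t - 1) ^ ((t - 1) * q + 1) := by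
  have h1 := pow_t_le_choose t ht q
  have h2 := choose_le_Ct' (t := t) q
  calc t ^ (t * q + 1) ≤ (t * q + 2) * ((t * q + 1).choose q * (t - 1) ^ ((t - 1) * q + 1)) := h1
    _ ≤ (t * q + 2) * (((t * q + 1) * Ct' t q) * (t - 1) ^ ((t - 1) * q + 1)) :=
        Nat.mul_le_mul_left _ (Nat.mul_le_mul_right _ h2)
    _ = (t * q + 2) * ((t * q + 1) * Ct' t q) * (t - 1) ^ ((t - 1) * q + 1) := by ring

lemma Ct'_pos (ht : 2 ≤ t) (n : ℕ) : 1 ≤ Ct' t n := by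
  by_contra h
  have h0 : Ct' t n = 0 := by omega
  have h1 := Ct'_nat_lower ht n
  rw [h0] at h1
  simp at h1
  have hp : 0 < t ^ (t * n + 1) := pow_pos (by omega) _
  omega

lemma Ct'_nat_upper (ht : 2 ≤ t) (q : ℕ) :
    Ct' t q * (t - 1) ^ ((t - 1) * q + 1) ≤ t ^ (t * q + 1) := by
  have h1 := choose_le_pow_t t ht q
  have h2 := Ct'_le_choose (t := t) q
  exact le_trans (Nat.mul_le_mul_right _ h2) h1

lemma log_Ct'_ge (ht : 2 ≤ t) (q : ℕ) :
    (q : ℝ) * alphaR t - 2 * Real.log (t * q + 2) ≤ Real.log (Ct' t q) := by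
  have h2 : (2 : ℝ) ≤ t := by exact_mod_cast ht
  have hcast : ((t - 1 : ℕ) : ℝ) = (t : ℝ) - 1 := cast_tsub ht
  have hCt := Ct'_pos ht q
  have hR : (t : ℝ) ^ (t * q + 1) ≤
      ((t * q + 2 : ℝ)) * (((t * q + 1 : ℝ)) * (Ct' t q : ℝ)) * ((t : ℝ) - 1) ^ ((t - 1) * q + 1) := by
    have := (Nat.cast_le (α := ℝ)).2 (Ct'_nat_lower ht q)
    push_cast at this
    rwa [hcast] at this
  have htm1 : (0 : ℝ) < (t : ℝ) - 1 := by linarith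
  have hq2 : (0 : ℝ) < (t : ℝ) * q + 2 := by positivity
  have hq1 : (0 : ℝ) < (t : ℝ) * q + 1 := by positivity
  have hCtR : (0 : ℝ) < (Ct' t q : ℝ) := by exact_mod_cast hCt
  have hlog := Real.log_le_log (by positivity) hR
  rw [Real.log_pow, Real.log_mul (by positivity) (by positivity),
    Real.log_mul (by positivity) (by positivity),
    Real.log_mul (by positivity) (ne_of_gt hCtR), Real.log_pow] at hlog
  have hc1 : (((t - 1) * q + 1 : ℕ) : ℝ) = ((t : ℝ) - 1) * q + 1 := by
    push_cast [Nat.cast_sub (show 1 ≤ t by omega)]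
    ring
  have hc2 : ((t * q + 1 : ℕ) : ℝ) = (t : ℝ) * q + 1 := by push_cast; ring
  rw [hc1, hc2] at hlog
  have hmono : Real.log ((t : ℝ) * q + 1) ≤ Real.log ((t : ℝ) * q + 2) :=
    Real.log_le_log hq1 (by linarith)
  have h1 := log_tsub_le ht
  have h0 := log_tsub_nonneg ht
  have hgoal : Real.log ((t : ℝ) * (q : ℝ) + 2) = Real.log ((t : ℕ) * q + 2 : ℝ) := by
    norm_cast
  rw [alphaR]
  push_cast
  nlinarith

end RealBounds

end TAry

lemma binEnt_eval {t : ℕ} (ht : 2 ≤ t) : binEnt (1 / (t : ℝ)) * t = TAry.alphaR t := by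
  have h2 : (2 : ℝ) ≤ t := by exact_mod_cast ht
  have ht0 : (t : ℝ) ≠ 0 := by linarith
  have ht1 : (t : ℝ) - 1 ≠ 0 := by linarith
  rw [binEnt, TAry.alphaR]
  rw [show (1 : ℝ) - 1 / (t : ℝ) = ((t : ℝ) - 1) / t by field_simp]
  rw [one_div, Real.log_inv, Real.log_div ht1 ht0]
  field_simp
  ring


set_option maxHeartbeats 2000000 in
/-- For `q(ℓ)` the least integer with `C_t(q) ≥ ℓ - 1`, one has
`q(ℓ) = (log² t / α)·m + O(log m)` where `m = ⌈log_t ℓ⌉` and `α = h(1/t)·t·log t`. -/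
theorem stmt19 (t : ℕ) (ht : 2 ≤ t) :
    ∃ c : ℝ, ∃ L₀ : ℕ, ∀ ℓ : ℕ, L₀ ≤ ℓ →
      |((sInf {q : ℕ | ℓ - 1 ≤ Ct t q} : ℕ) : ℝ) -
          (Real.log t) ^ 2 / (binEnt (1 / t) * t * Real.log t) * (Nat.clog t ℓ : ℝ)| ≤
        c * Real.log (Nat.clog t ℓ : ℝ) := by
  classical
  have h2R : (2 : ℝ) ≤ t := by exact_mod_cast ht
  have hLt : 0 < Real.log t := TAry.log_t_pos ht
  have hαpos : 0 < TAry.alphaR t := TAry.alphaR_pos ht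
  have hLtα : Real.log t ≤ TAry.alphaR t := TAry.log_t_le_alphaR ht
  have hl2 : Real.log 2 ≤ Real.log t := Real.log_le_log (by norm_num) h2R
  have hl2' : (0.6931471803 : ℝ) < Real.log 2 := Real.log_two_gt_d9
  refine ⟨7, max (t ^ (9 * t)) 2, ?_⟩
  intro ℓ hℓ
  set m := Nat.clog t ℓ with hm
  have hℓ2 : 2 ≤ ℓ := le_trans (le_max_right _ _) hℓ
  have hmge : 9 * t ≤ m := by
    have h := Nat.clog_mono_right t (le_trans (le_max_left _ _) hℓ)
    rwa [Nat.clog_pow _ _ (by omega)] at h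
  have hm18 : 18 ≤ m := by omega
  have hmR : (18 : ℝ) ≤ m := by exact_mod_cast hm18
  have hmpos : (0 : ℝ) < m := by linarith
  have hlogm1 : 1 ≤ Real.log m := by
    have h3 : Real.exp 1 ≤ (m : ℝ) := by
      have := Real.exp_one_lt_d9
      linarith
    calc (1 : ℝ) = Real.log (Real.exp 1) := (Real.log_exp 1).symm
      _ ≤ Real.log m := Real.log_le_log (Real.exp_pos 1) h3
  have hlogm0 : 0 < Real.log m := by linarith
  have hlogmm : Real.log m ≤ (m : ℝ) - 1 := Real.log_le_sub_one_of_pos hmpos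
  have hup : ℓ ≤ t ^ m := Nat.le_pow_clog (by omega) _
  have hlow : t ^ (m - 1) < ℓ := Nat.pow_pred_clog_lt_self (by omega) (by omega)
  -- the witness q₁
  set x : ℝ := ((m : ℝ) * Real.log t + 4 * Real.log m) / TAry.alphaR t with hx
  have hx0 : 0 ≤ x := by positivity
  set q₁ : ℕ := ⌈x⌉₊ with hq₁
  have hq₁x : x ≤ (q₁ : ℝ) := Nat.le_ceil x
  have hq₁x' : (q₁ : ℝ) < x + 1 := Nat.ceil_lt_add_one hx0
  have hxαR : x * TAry.alphaR t = (m : ℝ) * Real.log t + 4 * Real.log m :=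
    div_mul_cancel₀ _ (ne_of_gt hαpos)
  -- bound on q₁ : q₁ ≤ 8 m
  have hxle : x ≤ (m : ℝ) + 6 * Real.log m := by
    rw [hx, add_div]
    have e1 : (m : ℝ) * Real.log t / TAry.alphaR t ≤ m := by
      rw [div_le_iff₀ hαpos]
      nlinarith
    have e2 : 4 * Real.log m / TAry.alphaR t ≤ 6 * Real.log m := by
      rw [div_le_iff₀ hαpos]
      nlinarith
    linarith
  have hq₁8m : (q₁ : ℝ) ≤ 8 * m := by
    have : 6 * Real.log m + 1 ≤ 7 * (m : ℝ) := by nlinarith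
    linarith
  -- (t : ℝ) * q₁ + 2 ≤ m ^ 2
  have htq₁ : ((t * q₁ + 2 : ℕ) : ℝ) ≤ (m : ℝ) * m := by
    push_cast
    have h9 : (9 : ℝ) * t ≤ m := by exact_mod_cast hmge
    have htR : (2 : ℝ) ≤ t := h2R
    nlinarith
  have hlogtq₁ : Real.log ((t * q₁ + 2 : ℕ) : ℝ) ≤ 2 * Real.log m := by
    have h1 : Real.log ((t * q₁ + 2 : ℕ) : ℝ) ≤ Real.log ((m : ℝ) * m) :=
      Real.log_le_log (by positivity) htq₁
    rwa [Real.log_mul (ne_of_gt hmpos) (ne_of_gt hmpos), ← two_mul] at h1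
  -- q₁ is in the set
  have hq₁S : ℓ - 1 ≤ Ct t q₁ := by
    have hcond : (m : ℝ) * Real.log t ≤
        (q₁ : ℝ) * TAry.alphaR t - 2 * Real.log ((t * q₁ + 2 : ℕ) : ℝ) := by
      have h1 : x * TAry.alphaR t ≤ (q₁ : ℝ) * TAry.alphaR t :=
        mul_le_mul_of_nonneg_right hq₁x (le_of_lt hαpos)
      rw [hxαR] at h1
      linarith
    have hlogCt := TAry.log_Ct'_ge ht q₁
    have hCtpos : (0 : ℝ) < (TAry.Ct' t q₁ : ℝ) := by
      exact_mod_cast TAry.Ct'_pos ht q₁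
    have hpow : ((t ^ m : ℕ) : ℝ) ≤ (TAry.Ct' t q₁ : ℝ) := by
      have hlhs : Real.log ((t ^ m : ℕ) : ℝ) = (m : ℝ) * Real.log t := by
        push_cast
        rw [Real.log_pow]
      have h2 : Real.log ((t ^ m : ℕ) : ℝ) ≤ Real.log (TAry.Ct' t q₁ : ℝ) := by
        rw [hlhs]
        calc (m : ℝ) * Real.log t
            ≤ (q₁ : ℝ) * TAry.alphaR t - 2 * Real.log ((t * q₁ + 2 : ℕ) : ℝ) := hcond
          _ ≤ Real.log (TAry.Ct' t q₁ : ℝ) := by exact_mod_cast hlogCt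
      have hpp : (0 : ℝ) < ((t ^ m : ℕ) : ℝ) := by
        have : 0 < t ^ m := pow_pos (by omega) _
        exact_mod_cast this
      exact (Real.log_le_log_iff hpp hCtpos).1 h2
    have hnat : t ^ m ≤ TAry.Ct' t q₁ := by exact_mod_cast hpow
    have : ℓ - 1 ≤ TAry.Ct' t q₁ := by omega
    exact this
  -- sInf facts
  have hSne : {q : ℕ | ℓ - 1 ≤ Ct t q}.Nonempty := ⟨q₁, hq₁S⟩
  have hmem : sInf {q : ℕ | ℓ - 1 ≤ Ct t q} ∈ {q : ℕ | ℓ - 1 ≤ Ct t q} := Nat.sInf_mem hSne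
  have hle : sInf {q : ℕ | ℓ - 1 ≤ Ct t q} ≤ q₁ := Nat.sInf_le hq₁S
  set q : ℕ := sInf {q : ℕ | ℓ - 1 ≤ Ct t q} with hq
  have hmemq : ℓ - 1 ≤ Ct t q := hmem
  -- lower bound on q
  have hup' : (ℓ - 1) * (t - 1) ^ ((t - 1) * q + 1) ≤ t ^ (t * q + 1) := by
    refine le_trans (Nat.mul_le_mul_right _ hmemq) ?_
    exact TAry.Ct'_nat_upper ht q
  have hlogup := TAry.log_le_of_mul_pow_le ht (a := ℓ - 1) (by omega) hup'
  have hlbound : ((m : ℝ) - 1) * Real.log t ≤ (q : ℝ) * TAry.alphaR t + Real.log t := by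
    have h1 : t ^ (m - 1) ≤ ℓ - 1 := by omega
    have h2 : ((t ^ (m - 1) : ℕ) : ℝ) ≤ ((ℓ - 1 : ℕ) : ℝ) := by exact_mod_cast h1
    have h3 : Real.log ((t ^ (m - 1) : ℕ) : ℝ) ≤ Real.log ((ℓ - 1 : ℕ) : ℝ) := by
      refine Real.log_le_log ?_ h2
      have : 0 < t ^ (m - 1) := pow_pos (by omega) _
      exact_mod_cast this
    have h4 : Real.log ((t ^ (m - 1) : ℕ) : ℝ) = ((m : ℝ) - 1) * Real.log t := by
      push_cast
      rw [Real.log_pow]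
      rw [Nat.cast_sub (show 1 ≤ m by omega)]
      push_cast
      ring
    rw [h4] at h3
    exact le_trans h3 hlogup
  -- the coefficient equals log t / alphaR
  have hcoef : (Real.log t) ^ 2 / (binEnt (1 / (t : ℝ)) * t * Real.log t) =
      Real.log t / TAry.alphaR t := by
    rw [binEnt_eval ht, pow_two]
    rw [mul_div_mul_right _ _ (ne_of_gt hLt)]
  rw [hcoef]
  set Y : ℝ := Real.log t / TAry.alphaR t with hY
  have hYα : Y * TAry.alphaR t = Real.log t := div_mul_cancel₀ _ (ne_of_gt hαpos)
  rw [abs_le]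
  constructor
  · -- lower : -(7 log m) ≤ q - Y m
    have hkey : (Y * m - (q : ℝ)) * TAry.alphaR t ≤ (7 * Real.log m) * TAry.alphaR t := by
      have e1 : (Y * m) * TAry.alphaR t = (m : ℝ) * Real.log t := by
        rw [mul_comm Y (m : ℝ), mul_assoc, hYα]
      have e2 : (7 * Real.log m) * TAry.alphaR t ≥ 7 * TAry.alphaR t := by nlinarith
      nlinarith
    have := le_of_mul_le_mul_right hkey hαpos
    linarith
  · -- upper : q - Y m ≤ 7 log m
    have hqq₁ : (q : ℝ) ≤ (q₁ : ℝ) := by exact_mod_cast hle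
    have hkey : ((q : ℝ) - Y * m) * TAry.alphaR t ≤ (7 * Real.log m) * TAry.alphaR t := by
      have e1 : (Y * m) * TAry.alphaR t = (m : ℝ) * Real.log t := by
        rw [mul_comm Y (m : ℝ), mul_assoc, hYα]
      have h1 : (q : ℝ) * TAry.alphaR t < (x + 1) * TAry.alphaR t := by
        apply mul_lt_mul_of_pos_right _ hαpos
        linarith
      rw [add_mul, hxαR, one_mul] at h1
      -- q αR < m log t + 4 log m + αR
      have hα2 : (0.6931471803 : ℝ) < TAry.alphaR t := by linarith
      nlinarith [mul_nonneg (sub_nonneg.2 hlogm1) (show (0:ℝ) ≤ 7 * TAry.alphaR t - 4 by linarith)]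
    have := le_of_mul_le_mul_right hkey hαpos
    linarith
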